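/- For m = 1, the choice α = 2/3 in the symmetric two-level method yields a preconditioned operator M^{-1}Ã whose spectrum is contained in {1, 8/9}; consequently its minimal polynomial divides (x−1)(x−8/9), and GMRES applied to M^{-1}Ã converges in at most two iterations. -/

import Mathlib

open Matrix Polynomial

private lemma two_level_quad {R' : Type*} [Ring R'] [Algebra ℂ R'] (Y : R')
    (h : Y * Y = (1/9 : ℂ) • Y) :
    (1 - Y) * (1 - Y) = (17/9 : ℂ) • (1 - Y) - (8/9 : ℂ) • (1 : R') := by
  rw [mul_sub, sub_mul, sub_mul, h]
  simp only [one_mul, mul_one]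
  module

private lemma two_level_annihil {R' : Type*} [Ring R'] [Algebra ℂ R'] (M : R')
    (h : M * M = (17/9 : ℂ) • M - (8/9 : ℂ) • (1 : R')) :
    (Polynomial.aeval M) ((X - Polynomial.C 1) * (X - Polynomial.C (8 / 9 : ℂ))) = 0 := by
  rw [_root_.map_mul, map_sub, map_sub, aeval_X, aeval_C, aeval_C, _root_.map_one,
    Algebra.algebraMap_eq_smul_one, mul_sub, sub_mul, sub_mul, h]
  simp only [one_mul, mul_one, mul_smul_comm, smul_mul_assoc]
  module

/-- For `m = 1` and `α = 2/3`, the symmetric two-level preconditioned operator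
`M⁻¹Ã = I − E₁` has spectrum contained in `{1, 8/9}`, its minimal polynomial
divides `(x−1)(x−8/9)`, and GMRES converges in at most two iterations: the
solution of `M⁻¹Ã x = b` lies in the Krylov space `span{b, (M⁻¹Ã) b}`. -/
theorem two_level_m1_direct
    {n p : Type*} [Fintype n] [Fintype p] [DecidableEq n] [DecidableEq p]
    [Nonempty (n ⊕ p)]
    (A : Matrix n n ℂ) (B : Matrix n p ℂ) (C : Matrix p n ℂ) (D : Matrix p p ℂ)
    (hA : IsUnit A.det) (hD : IsUnit D.det)
    (hAtil : IsUnit (Matrix.fromBlocks A B C D).det)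
    (hT : ∃ (W : Matrix n n ℂ) (d : n → ℂ), IsUnit W.det ∧
      A⁻¹ * B * D⁻¹ * C = W * Matrix.diagonal d * W⁻¹)
    (hM₀ : IsUnit (Matrix.fromCols (-(C * A⁻¹)) (1 : Matrix p p ℂ) *
        Matrix.fromBlocks A B C D *
        Matrix.fromRows (-(A⁻¹ * B)) (1 : Matrix p p ℂ)).det) :
    let Atil : Matrix (n ⊕ p) (n ⊕ p) ℂ := Matrix.fromBlocks A B C D
    let Sinv : Matrix (n ⊕ p) (n ⊕ p) ℂ := Matrix.fromBlocks A⁻¹ 0 0 D⁻¹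
    let P : Matrix (n ⊕ p) p ℂ := Matrix.fromRows (-(A⁻¹ * B)) (1 : Matrix p p ℂ)
    let R : Matrix p (n ⊕ p) ℂ := Matrix.fromCols (-(C * A⁻¹)) (1 : Matrix p p ℂ)
    let M₀ : Matrix p p ℂ := R * Atil * P
    let Es : Matrix (n ⊕ p) (n ⊕ p) ℂ :=
      (1 : Matrix (n ⊕ p) (n ⊕ p) ℂ) - (2 / 3 : ℂ) • (Sinv * Atil)
    let Ec : Matrix (n ⊕ p) (n ⊕ p) ℂ :=
      (1 : Matrix (n ⊕ p) (n ⊕ p) ℂ) - P * M₀⁻¹ * R * Atil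
    let M : Matrix (n ⊕ p) (n ⊕ p) ℂ :=
      (1 : Matrix (n ⊕ p) (n ⊕ p) ℂ) - Es * Ec * Es
    spectrum ℂ M ⊆ {1, (8 / 9 : ℂ)} ∧
    minpoly ℂ M ∣ (X - Polynomial.C 1) * (X - Polynomial.C (8 / 9 : ℂ)) ∧
    ∀ b x : (n ⊕ p) → ℂ, M.mulVec x = b →
      x ∈ Submodule.span ℂ {b, M.mulVec b} := by
  intro Atil Sinv P R M₀ Es Ec M
  set F : Matrix n p ℂ := A⁻¹ * B with hF
  set G : Matrix p n ℂ := D⁻¹ * C with hG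
  set e : Matrix (n ⊕ p) (n ⊕ p) ℂ := fromBlocks 1 0 0 0 with he
  set f : Matrix (n ⊕ p) (n ⊕ p) ℂ := fromBlocks 0 F 0 0 with hf
  set g : Matrix (n ⊕ p) (n ⊕ p) ℂ := fromBlocks 0 0 G 0 with hg
  set Sc : Matrix p p ℂ := D - C * A⁻¹ * B with hSc
  -- block relations
  have hee : e * e = e := by rw [he, fromBlocks_multiply]; simp
  have hef : e * f = f := by rw [he, hf, fromBlocks_multiply]; simp
  have heg : e * g = 0 := by rw [he, hg, fromBlocks_multiply]; simp
  have hfe : f * e = 0 := by rw [he, hf, fromBlocks_multiply]; simp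
  have hff : f * f = 0 := by rw [hf, fromBlocks_multiply]; simp
  have hge : g * e = g := by rw [he, hg, fromBlocks_multiply]; simp
  have hgg : g * g = 0 := by rw [hg, fromBlocks_multiply]; simp
  -- Sinv * Atil = 1 + f + g
  have hSA : Sinv * Atil = 1 + f + g := by
    show (fromBlocks A⁻¹ 0 0 D⁻¹) * (fromBlocks A B C D) = _
    rw [hf, hg, fromBlocks_multiply, ← fromBlocks_one, fromBlocks_add, fromBlocks_add]
    simp [hF, hG, Matrix.nonsing_inv_mul _ hA, Matrix.nonsing_inv_mul _ hD]
  -- R * Atil = (0 | Sc)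
  have hRA : R * Atil = fromCols (0 : Matrix p n ℂ) Sc := by
    show (fromCols (-(C * A⁻¹)) (1 : Matrix p p ℂ)) * (fromBlocks A B C D) = _
    rw [fromCols_mul_fromBlocks, Matrix.neg_mul, Matrix.mul_assoc C,
      Matrix.nonsing_inv_mul _ hA, Matrix.mul_one, Matrix.one_mul, neg_add_cancel,
      Matrix.neg_mul, Matrix.one_mul, neg_add_eq_sub, hSc]
  -- M₀ = Sc (the Schur complement)
  have hM0 : M₀ = Sc := by
    show R * Atil * P = Sc
    rw [hRA]
    show fromCols (0 : Matrix p n ℂ) Sc * fromRows (-(A⁻¹*B)) (1 : Matrix p p ℂ) = Sc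
    rw [fromCols_mul_fromRows, Matrix.zero_mul, Matrix.mul_one, zero_add]
  have hScU : IsUnit Sc.det := by rw [← hM0]; exact hM₀
  -- Ec = e + f
  have hEc : Ec = e + f := by
    show 1 - P * M₀⁻¹ * R * Atil = e + f
    rw [Matrix.mul_assoc, hRA, hM0]
    show 1 - fromRows (-(A⁻¹*B)) (1 : Matrix p p ℂ) * Sc⁻¹ *
      fromCols (0 : Matrix p n ℂ) Sc = e + f
    rw [fromRows_mul, fromRows_mul_fromCols, Matrix.mul_zero, Matrix.mul_zero,
      Matrix.one_mul, Matrix.mul_assoc, Matrix.nonsing_inv_mul _ hScU, Matrix.mul_one]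
    rw [he, hf, ← fromBlocks_one, fromBlocks_add, sub_eq_add_neg, fromBlocks_neg,
      fromBlocks_add]
    simp [hF]
  -- Es = (1/3) • s
  set s : Matrix (n ⊕ p) (n ⊕ p) ℂ := 1 - (2:ℂ)•f - (2:ℂ)•g with hs
  have hEs : Es = (1/3 : ℂ) • s := by
    show 1 - (2/3 : ℂ) • (Sinv * Atil) = (1/3 : ℂ) • s
    rw [hSA, hs]
    module
  set K : Matrix (n ⊕ p) (n ⊕ p) ℂ := s * (e + f) * s with hK
  have hE : Es * Ec * Es = (1/9 : ℂ) • K := by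
    rw [hEs, hEc, hK, smul_mul_assoc, smul_mul_assoc, mul_smul_comm, smul_smul]
    norm_num
  -- the key projector identity K * K = K
  have hKK : K * K = K := by
    have hee' : ∀ x, e*(e*x) = e*x := fun x => by rw [← mul_assoc, hee]
    have hef' : ∀ x, e*(f*x) = f*x := fun x => by rw [← mul_assoc, hef]
    have heg' : ∀ x, e*(g*x) = 0 := fun x => by rw [← mul_assoc, heg, zero_mul]
    have hfe' : ∀ x, f*(e*x) = 0 := fun x => by rw [← mul_assoc, hfe, zero_mul]
    have hff' : ∀ x, f*(f*x) = 0 := fun x => by rw [← mul_assoc, hff, zero_mul]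
    have hge' : ∀ x, g*(e*x) = g*x := fun x => by rw [← mul_assoc, hge]
    have hgg' : ∀ x, g*(g*x) = 0 := fun x => by rw [← mul_assoc, hgg, zero_mul]
    rw [hK, hs]
    simp only [mul_add, add_mul, mul_sub, sub_mul, smul_mul_assoc, mul_smul_comm, smul_smul,
      mul_assoc, one_mul, mul_one, smul_add, smul_sub,
      hee, hef, heg, hfe, hff, hge, hgg, hee', hef', heg', hfe', hff', hge', hgg',
      zero_mul, mul_zero, smul_zero, add_zero, zero_add, sub_zero, zero_sub]
    module
  have hEE : (Es * Ec * Es) * (Es * Ec * Es) = (1/9 : ℂ) • (Es * Ec * Es) := by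
    rw [hE, smul_mul_assoc, mul_smul_comm, smul_smul, hKK, smul_smul]
  -- quadratic identity for M
  have hM2 : M * M = (17/9 : ℂ) • M - (8/9 : ℂ) • (1 : Matrix (n ⊕ p) (n ⊕ p) ℂ) :=
    two_level_quad (Es * Ec * Es) hEE
  have hq : (Polynomial.aeval M) ((X - Polynomial.C 1) * (X - Polynomial.C (8 / 9 : ℂ))) = 0 :=
    two_level_annihil M hM2
  refine ⟨?_, minpoly.dvd ℂ M hq, ?_⟩
  · intro k hk
    have h1 := spectrum.subset_polynomial_aeval M
      ((X - Polynomial.C 1) * (X - Polynomial.C (8 / 9 : ℂ))) ⟨k, hk, rfl⟩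
    rw [hq, spectrum.zero_eq] at h1
    simp only [eval_mul, eval_sub, eval_X, eval_C, Set.mem_singleton_iff, mul_eq_zero,
      sub_eq_zero] at h1
    rcases h1 with h1 | h1 <;> simp [h1]
  · intro b x hx
    have h2 : M.mulVec b = (17/9 : ℂ) • b - (8/9 : ℂ) • x := by
      rw [← hx, Matrix.mulVec_mulVec, hM2, Matrix.sub_mulVec, Matrix.smul_mulVec,
        Matrix.smul_mulVec, Matrix.one_mulVec, hx]
    have hx9 : x = (17/8 : ℂ) • b + (-(9/8) : ℂ) • M.mulVec b := by
      rw [h2]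
      module
    rw [Submodule.mem_span_pair]
    exact ⟨17/8, -(9/8), hx9.symm⟩
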